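/- Let m = (m_x, m_z) ∈ S² with m_x ∈ ℝ² and m_z ∈ ℝ, and set ρ = (R² - |a|²)/(2(R - ⟨m, a⟩)) with a = (a₁, a₂, c) ∈ ℝ³. The ray starting at a in direction a - ρ·m intersects the paraboloid {(p, q) : -4αq = |p|² - 4α² in shifted coordinates (p,q) = (x,y,z) - a} at parameter value λ* = 2α / (R + c - ρ(1 + m_z)), i.e., the point a + λ*·(a - ρ·m) lies on the paraboloid, provided R + c - ρ(1 + m_z) > 0. -/

import Mathlib

/-- The ray starting at the focus `a = (a₁, a₂, c)` in the direction `a - ρ·m`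
(the direction of the ray reflected off the spheroid at `ρ(m)·m`) meets the paraboloid
`-4αq = |p|² - 4α²` (in coordinates shifted by `a`) at the parameter value
`λ* = 2α/(R + c - ρ(1 + m_z))`; i.e. the point `a + λ*·(a - ρ·m)` lies on the paraboloid. -/
theorem ray_hits_paraboloid
    (a₁ a₂ c α R mx₁ mx₂ mz ρ lam : ℝ)
    (hα : 0 < α)
    (hR : Real.sqrt (a₁ ^ 2 + a₂ ^ 2 + c ^ 2) < R)
    (hm : mx₁ ^ 2 + mx₂ ^ 2 + mz ^ 2 = 1)
    (hρ : ρ = (R ^ 2 - (a₁ ^ 2 + a₂ ^ 2 + c ^ 2)) /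
      (2 * (R - (mx₁ * a₁ + mx₂ * a₂ + mz * c))))
    (hden : 0 < R + c - ρ * (1 + mz))
    (hlam : lam = 2 * α / (R + c - ρ * (1 + mz))) :
    -(4 * α * (lam * (c - ρ * mz))) =
      (lam * (a₁ - ρ * mx₁)) ^ 2 + (lam * (a₂ - ρ * mx₂)) ^ 2 - 4 * α ^ 2 := by
  set s := a₁ ^ 2 + a₂ ^ 2 + c ^ 2 with hs
  have hs0 : 0 ≤ s := by positivity
  have hRs : Real.sqrt s ≤ R := le_of_lt hR
  have hR0 : 0 ≤ R := le_trans (Real.sqrt_nonneg s) hRs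
  have hsR2 : s < R ^ 2 := by
    have := Real.sq_sqrt hs0
    nlinarith [Real.sqrt_nonneg s]
  -- Cauchy–Schwarz: inner product < R
  have hcs : (mx₁ * a₁ + mx₂ * a₂ + mz * c) ^ 2 ≤ s := by
    nlinarith [sq_nonneg (mx₁ * a₂ - mx₂ * a₁), sq_nonneg (mx₁ * c - mz * a₁),
      sq_nonneg (mx₂ * c - mz * a₂)]
  have hipR : mx₁ * a₁ + mx₂ * a₂ + mz * c < R := by
    nlinarith
  have hd1 : R - (mx₁ * a₁ + mx₂ * a₂ + mz * c) ≠ 0 := by linarith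
  have hkey : 2 * ρ * (R - (mx₁ * a₁ + mx₂ * a₂ + mz * c)) = R ^ 2 - s := by
    rw [hρ]; field_simp
  have hden' : R + c - ρ * (1 + mz) ≠ 0 := ne_of_gt hden
  have hlam' : lam * (R + c - ρ * (1 + mz)) = 2 * α := by
    rw [hlam]; field_simp
  linear_combination (-(2 * α) - lam * (R + c - ρ * (1 + mz)) + 2 * lam * (c - ρ * mz)) * hlam'
    - lam ^ 2 * hkey - lam ^ 2 * ρ ^ 2 * hm
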